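/- Let m ≥ 1 and c, C > 0, and let f be holomorphic on Ω(c,C)^m. Suppose f has asymptotic expansion 0, i.e. for every ν > 0 there exist c', C' > 0 with Ω(c',C') ⊆ Ω(c,C) such that f(z) = o(‖E(z)‖^ν) as ‖E(z)‖ → 0 with z ∈ Ω(c',C')^m. Then f vanishes identically on Ω(c,C)^m. Consequently, a holomorphic function on Ω(c,C)^m has at most one asymptotic expansion with natural support: if f has asymptotic expansions a and a′ then a = a′, and if two holomorphic functions on Ω(c,C)^m have the same asymptotic expansion then they are equal. -/

import Mathlib

noncomputable section
open scoped Classical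

/-- Logarithmic model of a standard quadratic domain:
`Ω(c,C) = {z : Re z < log c - C·√|Im z|}`. -/
def SQD (c C : ℝ) : Set ℂ := {z : ℂ | z.re < Real.log c - C * Real.sqrt |z.im|}

/-- The cartesian power `Ω(c,C)^m`. -/
def QDom (c C : ℝ) (m : ℕ) : Set (Fin m → ℂ) := {z | ∀ i, z i ∈ SQD c C}

/-- Open disc `D_R` of radius `R` centred at `0`. -/
def Disc (R : ℝ) : Set ℂ := {w : ℂ | ‖w‖ < R}

/-- Polydisc `D_R^n`. -/
def PDisc (R : ℝ) (n : ℕ) : Set (Fin n → ℂ) := {y | ∀ j, y j ∈ Disc R}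

/-- The exponential monomial `exp⟨α,z⟩`. -/
def expMono {m : ℕ} (α : Fin m → ℝ) (z : Fin m → ℂ) : ℂ :=
  Complex.exp (∑ i, (α i : ℂ) * z i)

/-- Euclidean norm of `E(z) = (exp (Re z₁), …, exp (Re z_m))`. -/
def eNorm {m : ℕ} (z : Fin m → ℂ) : ℝ :=
  Real.sqrt (∑ i, Real.exp ((z i).re) ^ 2)

/-- A generalized power series with natural support: nonnegative exponents, and in each
coordinate the set of exponents below any bound is finite. -/
def NaturalSeries {m : ℕ} (a : (Fin m → ℝ) → ℂ) : Prop :=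
  (∀ α, a α ≠ 0 → ∀ i, 0 ≤ α i) ∧
  ∀ i : Fin m, ∀ R : ℝ, 0 < R → {r : ℝ | (∃ α, a α ≠ 0 ∧ α i = r) ∧ r ≤ R}.Finite

/-- `f` has asymptotic expansion `a` on `Ω(c,C)^m`: for every `ν > 0` there is a smaller
standard quadratic domain on which `f` minus the partial sum of weight `≤ ν` is
`o(‖E(z)‖^ν)` as `‖E(z)‖ → 0`. -/
def HasAsymExp {m : ℕ} (c C : ℝ) (f : (Fin m → ℂ) → ℂ) (a : (Fin m → ℝ) → ℂ) : Prop :=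
  NaturalSeries a ∧
  ∀ ν : ℝ, 0 < ν → ∃ c' C' : ℝ, 0 < c' ∧ 0 < C' ∧ SQD c' C' ⊆ SQD c C ∧
    ∃ F : Finset (Fin m → ℝ),
      (∀ α, α ∈ F ↔ a α ≠ 0 ∧ ∑ i, α i ≤ ν) ∧
      ∀ ε : ℝ, 0 < ε → ∃ δ : ℝ, 0 < δ ∧
        ∀ z ∈ QDom c' C' m, eNorm z < δ →
          ‖f z - ∑ α ∈ F, a α * expMono α z‖ ≤ ε * eNorm z ^ ν

lemma re_cpow_half_nonneg {z : ℂ} (hz : 0 < z.re) : 0 ≤ (z ^ (1/2:ℂ)).re := by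
  have hz0 : z ≠ 0 := by intro h; rw [h] at hz; simp at hz
  rw [Complex.cpow_def_of_ne_zero hz0, Complex.exp_re]
  have him : (Complex.log z * (1/2)).im = z.arg / 2 := by
    simp [Complex.log_im]; ring
  rw [him]
  have harg : |z.arg| < Real.pi / 2 := Complex.abs_arg_lt_pi_div_two_iff.2 (Or.inl hz)
  have : Real.cos (z.arg / 2) ≥ 0 := by
    apply Real.cos_nonneg_of_mem_Icc
    have := abs_lt.1 harg
    constructor <;> nlinarith [Real.pi_pos]
  positivity

lemma sq_cpow_half {z : ℂ} : (z ^ (1/2:ℂ))^2 = z := by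
  have : (1/2 : ℂ) = ((2:ℕ):ℂ)⁻¹ := by norm_num
  rw [this]
  exact Complex.cpow_nat_inv_pow z two_ne_zero

lemma sfacts (w : ℂ) (hw : 0 ≤ w.re) :
    0 ≤ ((w+1) ^ (1/2:ℂ)).re ∧ |((w+1) ^ (1/2:ℂ)).im| ≤ ((w+1) ^ (1/2:ℂ)).re ∧
      1 + |w.im| ≤ 2 * ((w+1) ^ (1/2:ℂ)).re^2 := by
  set s := (w+1) ^ (1/2:ℂ) with hs
  have hre1 : 0 < (w+1).re := by simp [Complex.add_re]; linarith
  have h0 : 0 ≤ s.re := re_cpow_half_nonneg hre1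
  have h2 : s^2 = w+1 := sq_cpow_half
  have hres : s.re^2 - s.im^2 = w.re + 1 := by
    have := congrArg Complex.re h2
    simp [pow_two, Complex.mul_re] at this
    nlinarith [this]
  have habs : s.re^2 + s.im^2 = ‖w+1‖ := by
    have : ‖s‖ ^ 2 = ‖w+1‖ := by rw [← norm_pow, h2]
    rw [← this, Complex.sq_norm, Complex.normSq_apply]; ring
  have him : |w.im| ≤ ‖w+1‖ := by
    have := Complex.abs_im_le_norm (w+1)
    simpa using this
  refine ⟨h0, ?_, ?_⟩
  · nlinarith [abs_nonneg s.im, _root_.sq_abs s.im]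
  · nlinarith

lemma sqrt_add_le3 {x y : ℝ} (hx : 0 ≤ x) (hy : 0 ≤ y) :
    Real.sqrt (x + y) ≤ Real.sqrt x + Real.sqrt y := by
  have h1 : x + y ≤ (Real.sqrt x + Real.sqrt y)^2 := by
    nlinarith [Real.sq_sqrt hx, Real.sq_sqrt hy, Real.sqrt_nonneg x, Real.sqrt_nonneg y]
  calc Real.sqrt (x+y) ≤ Real.sqrt ((Real.sqrt x + Real.sqrt y)^2) := Real.sqrt_le_sqrt h1
    _ = _ := Real.sqrt_sq (by positivity)

noncomputable def curve (C₀ A : ℝ) (w : ℂ) : ℂ :=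
  ((A - 2 - C₀ : ℝ) : ℂ) - w - ((3*C₀ + 7*C₀^2 : ℝ) : ℂ) * (w+1)^(1/2:ℂ)

lemma curve_margin (C₀ : ℝ) (hC₀ : 0 < C₀) (A : ℝ) (w b : ℂ) (hw : 0 ≤ w.re) (hb : ‖b‖ ≤ 1) :
    (curve C₀ A w + b).re + C₀ * Real.sqrt |(curve C₀ A w + b).im| < A - w.re := by
  set K := 3*C₀ + 7*C₀^2 with hK
  have hKpos : 0 < K := by positivity
  set s := (w+1)^(1/2:ℂ) with hs
  obtain ⟨h0, h1, h2⟩ := sfacts w hw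
  rw [← hs] at h0 h1 h2
  have hbre : |b.re| ≤ 1 := (Complex.abs_re_le_norm b).trans hb
  have hbim : |b.im| ≤ 1 := (Complex.abs_im_le_norm b).trans hb
  have hzre : (curve C₀ A w + b).re = (A - 2 - C₀) - w.re - K * s.re + b.re := by
    simp only [curve, ← hK, ← hs, Complex.add_re, Complex.sub_re, Complex.ofReal_re,
      Complex.re_ofReal_mul]
  have hzim : (curve C₀ A w + b).im = - w.im - K * s.im + b.im := by
    simp only [curve, ← hK, ← hs, Complex.add_im, Complex.sub_im, Complex.ofReal_im,
      Complex.im_ofReal_mul]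
    ring
  clear_value K s
  have hs7 : (7:ℝ)/10 ≤ s.re := by nlinarith [abs_nonneg w.im]
  have hK8 : 8*C₀^2 ≤ K^2 := by nlinarith
  have hK4 : 4*C₀^2 ≤ K * s.re := by
    nlinarith [mul_le_mul_of_nonneg_left hs7 hKpos.le]
  have him : |(curve C₀ A w + b).im| ≤ |w.im| + K * |s.im| + 1 := by
    rw [hzim]
    have h3 := abs_add_three (- w.im) (-(K * s.im)) b.im
    have : - w.im - K * s.im + b.im = (- w.im) + (-(K * s.im)) + b.im := by ring
    rw [this]
    rw [abs_neg, abs_neg, abs_mul, abs_of_pos hKpos] at h3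
    linarith
  -- sqrt bound
  have hsq : Real.sqrt |(curve C₀ A w + b).im| ≤
      Real.sqrt |w.im| + Real.sqrt (K * |s.im|) + 1 := by
    calc Real.sqrt |(curve C₀ A w + b).im| ≤ Real.sqrt (|w.im| + K * |s.im| + 1) :=
          Real.sqrt_le_sqrt him
      _ ≤ Real.sqrt (|w.im| + K * |s.im|) + Real.sqrt 1 :=
          sqrt_add_le3 (by positivity) zero_le_one
      _ ≤ Real.sqrt |w.im| + Real.sqrt (K * |s.im|) + 1 := by
          have := sqrt_add_le3 (abs_nonneg w.im) (by positivity : (0:ℝ) ≤ K * |s.im|)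
          rw [Real.sqrt_one]
          linarith
  -- key bounds
  have key1 : C₀ * Real.sqrt |w.im| ≤ (K/2) * s.re := by
    have e1 : C₀ * Real.sqrt |w.im| = Real.sqrt (C₀^2 * |w.im|) := by
      rw [Real.sqrt_mul (sq_nonneg _), Real.sqrt_sq hC₀.le]
    have e2 : C₀^2 * |w.im| ≤ ((K/2) * s.re)^2 := by
      nlinarith [mul_le_mul_of_nonneg_left h2 (sq_nonneg C₀),
        mul_nonneg (by linarith : (0:ℝ) ≤ K^2 - 8*C₀^2) (sq_nonneg s.re), sq_nonneg C₀]
    rw [e1]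
    calc Real.sqrt (C₀^2 * |w.im|) ≤ Real.sqrt (((K/2) * s.re)^2) := Real.sqrt_le_sqrt e2
      _ = (K/2) * s.re := Real.sqrt_sq (by positivity)
  have key2 : C₀ * Real.sqrt (K * |s.im|) ≤ (K/2) * s.re := by
    have e1 : C₀ * Real.sqrt (K * |s.im|) = Real.sqrt (C₀^2 * (K * |s.im|)) := by
      rw [Real.sqrt_mul (sq_nonneg _), Real.sqrt_sq hC₀.le]
    have e2 : C₀^2 * (K * |s.im|) ≤ ((K/2) * s.re)^2 := by
      nlinarith [mul_le_mul_of_nonneg_left h1 (mul_nonneg (sq_nonneg C₀) hKpos.le),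
        mul_nonneg (by linarith : (0:ℝ) ≤ K * s.re - 4*C₀^2) (mul_nonneg hKpos.le h0)]
    rw [e1]
    calc Real.sqrt (C₀^2 * (K * |s.im|)) ≤ Real.sqrt (((K/2) * s.re)^2) := Real.sqrt_le_sqrt e2
      _ = (K/2) * s.re := Real.sqrt_sq (by positivity)
  have : C₀ * Real.sqrt |(curve C₀ A w + b).im| ≤ K * s.re + C₀ := by
    have := mul_le_mul_of_nonneg_left hsq hC₀.le
    nlinarith
  rw [hzre]
  have hbre' : b.re ≤ 1 := (le_abs_self _).trans hbre
  linarith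
lemma isOpen_SQD (c C : ℝ) : IsOpen (SQD c C) := by
  have : SQD c C = {z : ℂ | z.re - (Real.log c - C * Real.sqrt |z.im|) < 0} := by
    ext z; simp [SQD, sub_neg]
  rw [this]
  apply isOpen_lt _ continuous_const
  fun_prop

lemma isOpen_QDom (c C : ℝ) (m : ℕ) : IsOpen (QDom c C m) := by
  have : QDom c C m = Set.pi Set.univ (fun _ : Fin m => SQD c C) := by
    ext z; simp [QDom, Set.mem_pi]
  rw [this]
  exact isOpen_set_pi (Set.finite_univ) (fun i _ => isOpen_SQD c C)

lemma segment_mem {s : Set ℂ} {x y : ℂ}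
    (h : ∀ t : ℝ, 0 ≤ t → t ≤ 1 → (1-t) • x + t • y ∈ s) : JoinedIn s x y := by
  apply JoinedIn.of_segment_subset
  intro z hz
  rw [segment_eq_image] at hz
  obtain ⟨t, ht, rfl⟩ := hz
  exact h t ht.1 ht.2

lemma isPreconnected_SQD (c C : ℝ) (hC : 0 ≤ C) : IsPreconnected (SQD c C) := by
  have hbase : ((Real.log c - 1 : ℝ) : ℂ) ∈ SQD c C := by
    simp [SQD]
  have : IsPathConnected (SQD c C) := by
    refine ⟨((Real.log c - 1 : ℝ) : ℂ), hbase, ?_⟩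
    intro z hz
    set R : ℝ := min (min z.re (Real.log c - 1)) (Real.log c - C * Real.sqrt |z.im| - 1) with hR
    have hR1 : R ≤ z.re := (min_le_left _ _).trans (min_le_left _ _)
    have hR2 : R ≤ Real.log c - 1 := (min_le_left _ _).trans (min_le_right _ _)
    have hR3 : R ≤ Real.log c - C * Real.sqrt |z.im| - 1 := min_le_right _ _
    have hseg1 : JoinedIn (SQD c C) ⟨R, z.im⟩ z := by
      apply segment_mem
      intro t ht0 ht1
      have hre : ((1-t) • (⟨R, z.im⟩ : ℂ) + t • z).re = (1-t) * R + t * z.re := by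
        simp [Complex.add_re, Complex.smul_re]
      have him : ((1-t) • (⟨R, z.im⟩ : ℂ) + t • z).im = z.im := by
        simp [Complex.add_im, Complex.smul_im]; ring
      simp only [SQD, Set.mem_setOf_eq, hre, him]
      have := hz
      simp only [SQD, Set.mem_setOf_eq] at this
      nlinarith
    have hseg2 : JoinedIn (SQD c C) ⟨R, 0⟩ ⟨R, z.im⟩ := by
      apply segment_mem
      intro t ht0 ht1
      have hre : ((1-t) • (⟨R, 0⟩ : ℂ) + t • (⟨R, z.im⟩:ℂ)).re = R := by
        simp [Complex.add_re, Complex.smul_re]; ring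
      have him : ((1-t) • (⟨R, 0⟩ : ℂ) + t • (⟨R, z.im⟩:ℂ)).im = t * z.im := by
        simp [Complex.add_im, Complex.smul_im]
      simp only [SQD, Set.mem_setOf_eq, hre, him]
      have hmono : Real.sqrt |t * z.im| ≤ Real.sqrt |z.im| := by
        apply Real.sqrt_le_sqrt
        rw [abs_mul, abs_of_nonneg ht0]
        nlinarith [abs_nonneg z.im]
      nlinarith [mul_le_mul_of_nonneg_left hmono hC]
    have hseg3 : JoinedIn (SQD c C) ((Real.log c - 1 : ℝ) : ℂ) ⟨R, 0⟩ := by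
      apply segment_mem
      intro t ht0 ht1
      have hre : ((1-t) • ((Real.log c - 1:ℝ) : ℂ) + t • (⟨R, 0⟩:ℂ)).re
          = (1-t) * (Real.log c - 1) + t * R := by
        simp [Complex.add_re, Complex.smul_re]
      have him : ((1-t) • ((Real.log c - 1:ℝ) : ℂ) + t • (⟨R, 0⟩:ℂ)).im = 0 := by
        simp [Complex.add_im, Complex.smul_im]
      simp only [SQD, Set.mem_setOf_eq, hre, him]
      simp [Real.sqrt_zero]
      nlinarith
    exact (hseg3.trans hseg2).trans hseg1
  exact this.isConnected.isPreconnected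

lemma eNorm_nonneg {m : ℕ} (z : Fin m → ℂ) : 0 ≤ eNorm z := Real.sqrt_nonneg _

lemma eNorm_le {m : ℕ} (z : Fin m → ℂ) {d : ℝ} (hd : 0 ≤ d)
    (h : ∀ i, Real.exp ((z i).re) ≤ d) : eNorm z ≤ Real.sqrt m * d := by
  unfold eNorm
  have hsum : ∑ i, Real.exp ((z i).re) ^ 2 ≤ (m : ℝ) * d ^ 2 := by
    calc ∑ i, Real.exp ((z i).re) ^ 2 ≤ ∑ _i : Fin m, d ^ 2 := by
          apply Finset.sum_le_sum
          intro i _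
          nlinarith [Real.exp_pos ((z i).re), h i]
      _ = (m : ℝ) * d ^ 2 := by simp [Finset.sum_const, nsmul_eq_mul]
  calc Real.sqrt (∑ i, Real.exp ((z i).re) ^ 2) ≤ Real.sqrt ((m:ℝ) * d ^ 2) :=
        Real.sqrt_le_sqrt hsum
    _ = Real.sqrt m * d := by
        rw [Real.sqrt_mul (Nat.cast_nonneg m), Real.sqrt_sq hd]

lemma curve_ofReal_im (C₀ A : ℝ) (x : ℝ) (hx : 0 ≤ x) : (curve C₀ A (x:ℂ)).im = 0 := by
  unfold curve
  have h1 : ((x:ℂ)+1) = (((x+1 : ℝ)):ℂ) := by push_cast; ring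
  have h2 : ((x:ℂ)+1) ^ (1/2 : ℂ) = (((x+1:ℝ) ^ ((1:ℝ)/2) : ℝ) : ℂ) := by
    rw [h1, show ((1/2:ℂ)) = (((1:ℝ)/2:ℝ):ℂ) by norm_num, Complex.ofReal_cpow (by linarith)]
  rw [h2]
  simp [pow_two, Complex.mul_im]
lemma curve_mem {C₀ : ℝ} (hC₀ : 0 < C₀) {A : ℝ} {c' : ℝ} (hA : A ≤ Real.log c')
    {w b : ℂ} (hw : 0 ≤ w.re) (hb : ‖b‖ ≤ 1) : curve C₀ A w + b ∈ SQD c' C₀ := by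
  have h := curve_margin C₀ hC₀ A w b hw hb
  have h2 : (0:ℝ) ≤ Real.sqrt |(curve C₀ A w + b).im| := Real.sqrt_nonneg _
  simp only [SQD, Set.mem_setOf_eq]
  nlinarith

lemma curve_re_lt {C₀ : ℝ} (hC₀ : 0 < C₀) (A : ℝ)
    {w b : ℂ} (hw : 0 ≤ w.re) (hb : ‖b‖ ≤ 1) : (curve C₀ A w + b).re < A - w.re := by
  have h := curve_margin C₀ hC₀ A w b hw hb
  have h2 : (0:ℝ) ≤ Real.sqrt |(curve C₀ A w + b).im| := Real.sqrt_nonneg _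
  nlinarith

lemma vanish {m : ℕ} (hm : 1 ≤ m) {c C : ℝ} (hc : 0 < c) (hC : 0 < C)
    {f : (Fin m → ℂ) → ℂ} (hf : DifferentiableOn ℂ f (QDom c C m))
    (h0 : HasAsymExp c C f (fun _ => 0)) : ∀ z ∈ QDom c C m, f z = 0 := by
  obtain ⟨-, hexp⟩ := h0
  obtain ⟨c₁, C₁, hc₁, hC₁, hsub₁, F₁, hF₁, hest₁⟩ := hexp 1 one_pos
  obtain ⟨δ₁, hδ₁pos, hδ₁⟩ := hest₁ 1 one_pos
  have hsubQ : QDom c₁ C₁ m ⊆ QDom c C m := fun z hz i => hsub₁ (hz i)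
  have hQopen := isOpen_QDom c C m
  -- the zero sum
  have hzero_sum : ∀ F : Finset (Fin m → ℝ), ∀ z, (∑ α ∈ F, (fun _ => (0:ℂ)) α * expMono α z) = 0 := by
    intro F z; simp
  have hfbd : ∀ z ∈ QDom c₁ C₁ m, eNorm z < δ₁ → ‖f z‖ ≤ eNorm z := by
    intro z hz he
    have := hδ₁ z hz he
    rw [hzero_sum, sub_zero, one_mul, Real.rpow_one] at this
    exact this
  -- parameters
  have hsqm : (0:ℝ) < Real.sqrt m := Real.sqrt_pos.2 (by exact_mod_cast hm)
  set d : ℝ := δ₁ / (2 * Real.sqrt m) with hd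
  have hdpos : 0 < d := by positivity
  set A : ℝ := min (Real.log c₁) (Real.log d) with hA
  -- membership and size along the curve
  have hmem : ∀ w : ℂ, 0 ≤ w.re → ∀ b : ℂ, ‖b‖ ≤ 1 → curve C₁ A w + b ∈ SQD c₁ C₁ :=
    fun w hw b hb => curve_mem hC₁ (min_le_left _ _) hw hb
  have hexple : ∀ w : ℂ, 0 ≤ w.re → ∀ b : ℂ, ‖b‖ ≤ 1 →
      Real.exp ((curve C₁ A w + b).re) ≤ d := by
    intro w hw b hb
    have h1 := curve_re_lt hC₁ A hw hb
    have h2 : (curve C₁ A w + b).re < Real.log d := by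
      have := min_le_right (Real.log c₁) (Real.log d)
      rw [← hA] at this
      linarith
    calc Real.exp ((curve C₁ A w + b).re) ≤ Real.exp (Real.log d) :=
          Real.exp_le_exp.2 h2.le
      _ = d := Real.exp_log hdpos
  have hcurveQ : ∀ (w : ℂ), 0 ≤ w.re → ∀ b : Fin m → ℂ, (∀ i, ‖b i‖ ≤ 1) →
      (fun i => curve C₁ A w + b i) ∈ QDom c₁ C₁ m ∧
        eNorm (fun i => curve C₁ A w + b i) < δ₁ := by
    intro w hw b hb
    refine ⟨fun i => hmem w hw (b i) (hb i), ?_⟩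
    have := eNorm_le (fun i => curve C₁ A w + b i) hdpos.le
      (fun i => hexple w hw (b i) (hb i))
    have : eNorm (fun i => curve C₁ A w + b i) ≤ δ₁ / 2 := by
      rw [hd] at this
      calc eNorm (fun i => curve C₁ A w + b i) ≤ Real.sqrt m * (δ₁ / (2 * Real.sqrt m)) := this
        _ = δ₁ / 2 := by field_simp
    linarith
  -- the main Phragmen-Lindelof step
  have main : ∀ b : Fin m → ℂ, (∀ i, ‖b i‖ ≤ 1) → f (fun i => curve C₁ A 0 + b i) = 0 := by
    intro b hb
    set g : ℂ → ℂ := fun w => f (fun i => curve C₁ A w + b i) with hg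
    -- differentiability of the curve
    have hZdiff : ∀ w : ℂ, 0 ≤ w.re →
        DifferentiableAt ℂ (fun w' : ℂ => (fun i => curve C₁ A w' + b i : Fin m → ℂ)) w := by
      intro w hw
      apply differentiableAt_pi.2
      intro i
      have hslit : w + 1 ∈ Complex.slitPlane := Or.inl (by simp [Complex.add_re]; linarith)
      have hcpow : DifferentiableAt ℂ (fun w' : ℂ => (w' + 1) ^ (1/2 : ℂ)) w :=
        (differentiableAt_id.add_const 1).cpow (differentiableAt_const _) hslit
      unfold curve
      apply DifferentiableAt.add_const
      apply DifferentiableAt.sub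
      · exact (differentiableAt_const _).sub differentiableAt_id
      · exact hcpow.const_mul _
    have hZcont : ∀ w : ℂ, 0 ≤ w.re →
        ContinuousAt (fun w' : ℂ => (fun i => curve C₁ A w' + b i : Fin m → ℂ)) w := by
      intro w hw
      apply continuousAt_pi.2
      intro i
      have hslit : w + 1 ∈ Complex.slitPlane := Or.inl (by simp [Complex.add_re]; linarith)
      have hcpow : ContinuousAt (fun w' : ℂ => (w' + 1) ^ (1/2 : ℂ)) w :=
        ContinuousAt.cpow (by fun_prop) (continuousAt_const) hslit
      unfold curve
      fun_prop
    have hgbd : ∀ w : ℂ, 0 ≤ w.re → ‖g w‖ ≤ δ₁ := by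
      intro w hw
      obtain ⟨hmemQ, hsize⟩ := hcurveQ w hw b hb
      have := hfbd _ hmemQ hsize
      calc ‖g w‖ ≤ eNorm (fun i => curve C₁ A w + b i) := this
        _ ≤ δ₁ := (by linarith [hsize])
    have hfat : ∀ w : ℂ, 0 ≤ w.re →
        DifferentiableAt ℂ f ((fun i => curve C₁ A w + b i : Fin m → ℂ)) := by
      intro w hw
      exact hf.differentiableAt (hQopen.mem_nhds (hsubQ (hcurveQ w hw b hb).1))
    have hgdiff : DifferentiableOn ℂ g {w : ℂ | 0 < w.re} := by
      intro w hw
      exact (((hfat w (le_of_lt hw)).comp w (hZdiff w (le_of_lt hw)))).differentiableWithinAt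
    have hgcont : ContinuousOn g (closure {w : ℂ | 0 < w.re}) := by
      rw [Complex.closure_setOf_lt_re]
      intro w hw
      exact (((hfat w hw).continuousAt.comp (hZcont w hw))).continuousWithinAt
    have hPL := PhragmenLindelof.eq_zero_on_right_half_plane_of_superexponential_decay
      (f := g) ⟨hgdiff, hgcont⟩
      ⟨1, one_lt_two, 0, by
        apply Asymptotics.IsBigO.of_bound δ₁
        rw [Filter.eventually_inf_principal]
        apply Filter.Eventually.of_forall
        intro w hw
        simp only [Set.mem_setOf_eq] at hw
        have := hgbd w hw.le
        simp only [Real.norm_eq_abs, zero_mul, Real.exp_zero, abs_one, mul_one]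
        exact this⟩
      ?_ ⟨δ₁, fun x => hgbd (x * Complex.I) (by simp)⟩
    · -- conclude
      have h00 : (0:ℂ) ∈ {z : ℂ | 0 ≤ z.re} := by simp
      have := hPL h00
      simpa [hg] using this
    · -- superpolynomial decay along the real axis
      intro n
      obtain ⟨c₂, C₂, hc₂, hC₂, hsub₂, F₂, hF₂, hest₂⟩ := hexp ((n:ℝ)+1) (by positivity)
      obtain ⟨δ₂, hδ₂pos, hδ₂⟩ := hest₂ 1 one_pos
      set E : ℝ := Real.sqrt m * Real.exp A with hE
      have hEpos : 0 < E := by positivity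
      have hbound : ∀ᶠ x : ℝ in Filter.atTop,
          Real.exp x ^ n * ‖g x‖ ≤ E ^ ((n:ℝ)+1) * Real.exp (-x) := by
        have h1 : ∀ᶠ x : ℝ in Filter.atTop, (0:ℝ) ≤ x := Filter.eventually_ge_atTop 0
        have h2 : ∀ᶠ x : ℝ in Filter.atTop, A - x + C₂ < Real.log c₂ := by
          filter_upwards [Filter.eventually_gt_atTop (A + C₂ - Real.log c₂)] with x hx
          linarith
        have h3 : ∀ᶠ x : ℝ in Filter.atTop, Real.sqrt m * Real.exp (A - x) < δ₂ := by
          have hlim : Filter.Tendsto (fun x : ℝ => Real.sqrt m * Real.exp (A - x))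
              Filter.atTop (nhds 0) := by
            have t1 : Filter.Tendsto (fun x : ℝ => A - x) Filter.atTop Filter.atBot := by
              apply Filter.tendsto_atBot_add_const_left
              exact Filter.tendsto_neg_atTop_atBot
            have t2 := Real.tendsto_exp_atBot.comp t1
            have := t2.const_mul (Real.sqrt m)
            simpa using this
          exact hlim.eventually_lt_const hδ₂pos
        filter_upwards [h1, h2, h3] with x hx0 hx2 hx3
        have hxre : (0:ℝ) ≤ (x:ℂ).re := by simpa using hx0
        -- coordinates
        have hre_i : ∀ i, (curve C₁ A (x:ℂ) + b i).re < A - x := by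
          intro i
          have := curve_re_lt hC₁ A hxre (hb i)
          simpa using this
        have him_i : ∀ i, |(curve C₁ A (x:ℂ) + b i).im| ≤ 1 := by
          intro i
          have : (curve C₁ A (x:ℂ) + b i).im = (b i).im := by
            rw [Complex.add_im, curve_ofReal_im C₁ A x hx0, zero_add]
          rw [this]
          exact (Complex.abs_im_le_norm (b i)).trans (hb i)
        have hmem₂ : (fun i => curve C₁ A (x:ℂ) + b i) ∈ QDom c₂ C₂ m := by
          intro i
          simp only [SQD, Set.mem_setOf_eq]
          have hs1 : Real.sqrt |(curve C₁ A (x:ℂ) + b i).im| ≤ 1 :=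
            Real.sqrt_le_one.2 (him_i i)
          have := mul_le_mul_of_nonneg_left hs1 hC₂.le
          have := hre_i i
          nlinarith
        have heB : eNorm (fun i => curve C₁ A (x:ℂ) + b i) ≤ Real.sqrt m * Real.exp (A - x) := by
          apply eNorm_le _ (Real.exp_nonneg _)
          intro i
          exact (Real.exp_le_exp.2 (hre_i i).le)
        have heδ : eNorm (fun i => curve C₁ A (x:ℂ) + b i) < δ₂ := lt_of_le_of_lt heB hx3
        have hfx := hδ₂ _ hmem₂ heδ
        rw [hzero_sum, sub_zero, one_mul] at hfx
        have hrpow : eNorm (fun i => curve C₁ A (x:ℂ) + b i) ^ ((n:ℝ)+1)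
            ≤ E ^ ((n:ℝ)+1) * Real.exp (-(x * ((n:ℝ)+1))) := by
          have step1 : eNorm (fun i => curve C₁ A (x:ℂ) + b i) ^ ((n:ℝ)+1)
              ≤ (Real.sqrt m * Real.exp (A - x)) ^ ((n:ℝ)+1) :=
            Real.rpow_le_rpow (eNorm_nonneg _) heB (by positivity)
          have e1 : Real.sqrt m * Real.exp (A - x) = E * Real.exp (-x) := by
            rw [hE, mul_assoc, ← Real.exp_add]
            ring_nf
          have e2 : (E * Real.exp (-x)) ^ ((n:ℝ)+1)
              = E ^ ((n:ℝ)+1) * Real.exp (-x) ^ ((n:ℝ)+1) :=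
            Real.mul_rpow hEpos.le (Real.exp_nonneg _)
          have e3 : Real.exp (-x) ^ ((n:ℝ)+1) = Real.exp (-(x * ((n:ℝ)+1))) := by
            rw [Real.rpow_def_of_pos (Real.exp_pos _), Real.log_exp]
            ring_nf
          rw [e1, e2, e3] at step1
          exact step1
        have hgx : ‖g x‖ ≤ E ^ ((n:ℝ)+1) * Real.exp (-(x * ((n:ℝ)+1))) :=
          le_trans hfx hrpow
        calc Real.exp x ^ n * ‖g x‖
            ≤ Real.exp x ^ n * (E ^ ((n:ℝ)+1) * Real.exp (-(x * ((n:ℝ)+1)))) :=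
              mul_le_mul_of_nonneg_left hgx (by positivity)
          _ = E ^ ((n:ℝ)+1) * (Real.exp x ^ n * Real.exp (-(x * ((n:ℝ)+1)))) := by ring
          _ = E ^ ((n:ℝ)+1) * Real.exp (-x) := by
              rw [← Real.exp_nat_mul, ← Real.exp_add]
              congr 1
              push_cast
              ring
      have hnn : ∀ᶠ x : ℝ in Filter.atTop, 0 ≤ Real.exp x ^ n * ‖g x‖ :=
        Filter.Eventually.of_forall (fun x => by positivity)
      have hlim0 : Filter.Tendsto (fun x : ℝ => E ^ ((n:ℝ)+1) * Real.exp (-x))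
          Filter.atTop (nhds 0) := by
        have t1 : Filter.Tendsto (fun x : ℝ => Real.exp (-x)) Filter.atTop (nhds 0) := by
          have := Real.tendsto_exp_atBot.comp Filter.tendsto_neg_atTop_atBot
          exact this
        have := t1.const_mul (E ^ ((n:ℝ)+1))
        simpa using this
      exact squeeze_zero' hnn hbound hlim0
  -- f vanishes on the polydisc around the base point
  set p : ℂ := curve C₁ A 0 with hp
  have hpSQD : ∀ ζ : ℂ, ‖ζ - p‖ ≤ 1 → ζ ∈ SQD c C := by
    intro ζ hζ
    have := hmem 0 (by simp) (ζ - p) hζ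
    rw [hp] at *
    simpa using hsub₁ this
  have step1 : ∀ z : Fin m → ℂ, (∀ i, ‖z i - p‖ ≤ 1) → f z = 0 := by
    intro z hz
    have := main (fun i => z i - p) hz
    simpa using this
  -- identity theorem, one coordinate at a time
  have hppt : p ∈ SQD c C := hpSQD p (by simp)
  have key : ∀ k : ℕ, ∀ z ∈ QDom c C m, (∀ i : Fin m, k ≤ i.val → ‖z i - p‖ ≤ 1) → f z = 0 := by
    intro k
    induction k with
    | zero => exact fun z hz hcond => step1 z (fun i => hcond i (Nat.zero_le _))
    | succ k ih =>
      intro z hz hcond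
      by_cases hk : k < m
      · set kk : Fin m := ⟨k, hk⟩ with hkk
        set h : ℂ → ℂ := fun ζ => f (Function.update z kk ζ) with hh
        have hupd_mem : ∀ ζ ∈ SQD c C, Function.update z kk ζ ∈ QDom c C m := by
          intro ζ hζ i
          rw [Function.update_apply]
          split
          · exact hζ
          · exact hz i
        have hhd : DifferentiableOn ℂ h (SQD c C) := by
          intro ζ hζ
          apply DifferentiableAt.differentiableWithinAt
          have hfa : DifferentiableAt ℂ f (Function.update z kk ζ) :=
            hf.differentiableAt (hQopen.mem_nhds (hupd_mem ζ hζ))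
          have hud : DifferentiableAt ℂ (fun ζ' : ℂ => Function.update z kk ζ') ζ := by
            apply differentiableAt_pi.2
            intro i
            simp only [Function.update_apply]
            split
            · exact differentiableAt_id
            · exact differentiableAt_const _
          exact hfa.comp ζ hud
        have hzero : ∀ ζ ∈ Metric.ball p 1, h ζ = 0 := by
          intro ζ hζ
          have hζ1 : ‖ζ - p‖ ≤ 1 := by
            rw [Metric.mem_ball, dist_eq_norm] at hζ
            exact hζ.le
          apply ih (Function.update z kk ζ) (hupd_mem ζ (hpSQD ζ hζ1))
          intro i hi
          rw [Function.update_apply]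
          split
          · exact hζ1
          · next hne =>
            apply hcond i
            rcases Nat.lt_or_ge i.val (k+1) with hlt | hge
            · exfalso
              have : i.val = k := Nat.le_antisymm (Nat.lt_succ_iff.1 hlt) hi
              exact hne (Fin.ext this)
            · exact hge
        have hev : h =ᶠ[nhds p] 0 := by
          apply Filter.eventuallyEq_of_mem (Metric.ball_mem_nhds p one_pos)
          intro ζ hζ
          exact hzero ζ hζ
        have heq : Set.EqOn h 0 (SQD c C) :=
          (hhd.analyticOnNhd (isOpen_SQD c C)).eqOn_zero_of_preconnected_of_eventuallyEq_zero
            (isPreconnected_SQD c C hC.le) hppt hev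
        have := heq (hz kk)
        rw [hh] at this
        simpa [Function.update_eq_self] using this
      · exact ih z hz (fun i hi => absurd (lt_of_lt_of_le i.isLt (not_lt.1 hk)) (not_lt.2 hi))
  intro z hz
  exact key m z hz (fun i hi => absurd hi (not_le.2 i.isLt))
open MeasureTheory

lemma exists_generic {m : ℕ} (V : Finset (Fin m → ℝ)) (hV : ∀ v ∈ V, v ≠ 0) (η : ℝ) (hη : 0 < η) :
    ∃ lam : Fin m → ℝ, (∀ i, 1 < lam i ∧ lam i < 1 + η) ∧ ∀ v ∈ V, (∑ i, v i * lam i) ≠ 0 := by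
  classical
  set B : Set (Fin m → ℝ) := Set.univ.pi fun _ => Set.Ioo (1:ℝ) (1+η) with hB
  have hBpos : 0 < volume B := by
    rw [hB, volume_pi_pi]; simp [Real.volume_Ioo]; positivity
  set N : Set (Fin m → ℝ) := ⋃ v ∈ V, {lam | ∑ i, v i * lam i = 0} with hN
  have hNm : volume N = 0 := by
    refine measure_biUnion_null_iff (V.countable_toSet) |>.2 ?_
    intro v hv
    have hv0 : v ≠ 0 := hV v hv
    set φ : (Fin m → ℝ) →ₗ[ℝ] ℝ := ∑ i, v i • LinearMap.proj i with hφ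
    have hφa : ∀ lam, φ lam = ∑ i, v i * lam i := by
      intro lam; simp [hφ, LinearMap.sum_apply]
    have : {lam : Fin m → ℝ | ∑ i, v i * lam i = 0} = (LinearMap.ker φ : Set (Fin m → ℝ)) := by
      ext lam; simp [LinearMap.mem_ker, hφa]
    rw [this]
    refine Measure.addHaar_submodule _ _ ?_
    intro h
    obtain ⟨j, hj⟩ : ∃ j, v j ≠ 0 := by
      by_contra h'; push_neg at h'; exact hv0 (funext h')
    have : φ (Pi.single j 1) = 0 := by
      have := LinearMap.ker_eq_top.1 h
      rw [this]; rfl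
    rw [hφa] at this
    simp [Pi.single_apply] at this
    exact hj this
  have : (B \ N).Nonempty := by
    rw [Set.nonempty_iff_ne_empty]
    intro h
    have : volume B ≤ volume N := by
      refine measure_mono ?_
      intro x hx
      by_contra hxN
      exact (Set.eq_empty_iff_forall_notMem.1 h x) ⟨hx, hxN⟩
    rw [hNm] at this
    exact absurd (le_antisymm this zero_le) (ne_of_gt hBpos)
  obtain ⟨lam, hlamB, hlamN⟩ := this
  refine ⟨lam, fun i => by simpa using hlamB i (Set.mem_univ i), ?_⟩
  intro v hv h
  exact hlamN (Set.mem_biUnion hv h)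

lemma expsum_contra {m : ℕ} (hm : 1 ≤ m) {c₀ C₀ : ℝ} (hc₀ : 0 < c₀)
    (S : Finset (Fin m → ℝ)) (b : (Fin m → ℝ) → ℂ)
    (hpos : ∀ α ∈ S, ∀ i, 0 ≤ α i)
    (α₀ : Fin m → ℝ) (hα₀S : α₀ ∈ S) (hbα₀ : b α₀ ≠ 0)
    (ν : ℝ) (hν : ∑ i, α₀ i < ν) {M δ : ℝ} (hM : 0 ≤ M) (hδ : 0 < δ)
    (hsmall : ∀ z ∈ QDom c₀ C₀ m, eNorm z < δ →
       ‖∑ α ∈ S, b α * expMono α z‖ ≤ M * eNorm z ^ ν) : False := by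
  classical
  have hw₀ : 0 ≤ ∑ i, α₀ i := Finset.sum_nonneg (fun i _ => hpos α₀ hα₀S i)
  have hν0 : 0 < ν := lt_of_le_of_lt hw₀ hν
  set S' : Finset (Fin m → ℝ) := S.filter (fun α => b α ≠ 0) with hS'
  have hα₀S' : α₀ ∈ S' := Finset.mem_filter.2 ⟨hα₀S, hbα₀⟩
  set V : Finset (Fin m → ℝ) :=
    ((S' ×ˢ S').filter (fun q => q.1 ≠ q.2)).image (fun q => q.1 - q.2) with hV
  have hVne : ∀ v ∈ V, v ≠ 0 := by
    intro v hv
    rw [hV] at hv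
    obtain ⟨⟨β, γ⟩, hq, rfl⟩ := Finset.mem_image.1 hv
    have := (Finset.mem_filter.1 hq).2
    exact sub_ne_zero.2 this
  set η : ℝ := (ν - ∑ i, α₀ i) / (∑ i, α₀ i + 1) with hη
  have hηpos : 0 < η := by
    apply div_pos (by linarith) (by linarith)
  obtain ⟨lam, hlam, hlamV⟩ := exists_generic V hVne η hηpos
  set L : (Fin m → ℝ) → ℝ := fun α => ∑ i, α i * lam i with hL
  have hLinj : ∀ β ∈ S', ∀ γ ∈ S', β ≠ γ → L β ≠ L γ := by
    intro β hβ γ hγ hne heq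
    have hmem : β - γ ∈ V := by
      rw [hV]
      exact Finset.mem_image.2 ⟨(β, γ), Finset.mem_filter.2 ⟨Finset.mem_product.2 ⟨hβ, hγ⟩, hne⟩, rfl⟩
    apply hlamV _ hmem
    have : ∑ i, (β i - γ i) * lam i = L β - L γ := by
      rw [hL]
      rw [← Finset.sum_sub_distrib]
      congr 1; funext i; ring
    rw [show (β - γ) = fun i => β i - γ i from rfl]
    simp only [Pi.sub_apply] at *
    rw [this, heq, sub_self]
  obtain ⟨αs, hαsS', hαsmin⟩ := S'.exists_min_image L ⟨α₀, hα₀S'⟩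
  set μ : ℝ := L αs with hμ
  have hbαs : b αs ≠ 0 := (Finset.mem_filter.1 hαsS').2
  -- μ < ν
  have hLα₀ : L α₀ < ν := by
    have : ∀ i, α₀ i * lam i ≤ α₀ i * (1 + η) := by
      intro i
      exact mul_le_mul_of_nonneg_left (hlam i).2.le (hpos α₀ hα₀S i)
    have hsum : L α₀ ≤ (∑ i, α₀ i) * (1 + η) := by
      rw [hL]
      calc ∑ i, α₀ i * lam i ≤ ∑ i, α₀ i * (1 + η) := Finset.sum_le_sum (fun i _ => this i)
        _ = (∑ i, α₀ i) * (1 + η) := by rw [← Finset.sum_mul]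
    have hkey : (∑ i, α₀ i) * (1 + η) < ν := by
      rw [hη]
      have h1 : (0:ℝ) < ∑ i, α₀ i + 1 := by linarith
      rw [show (1 + (ν - ∑ i, α₀ i)/(∑ i, α₀ i + 1))
          = (∑ i, α₀ i + 1 + (ν - ∑ i, α₀ i))/(∑ i, α₀ i + 1) by field_simp]
      rw [← mul_div_assoc, div_lt_iff₀ h1]
      nlinarith
    linarith
  have hμν : μ < ν := lt_of_le_of_lt (hαsmin α₀ hα₀S') hLα₀
  -- the curve t ↦ (lam i * t)
  set Z : ℝ → (Fin m → ℂ) := fun t => fun i => (((lam i) * t : ℝ) : ℂ) with hZ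
  have hZre : ∀ t i, ((Z t) i).re = lam i * t := by intro t i; simp [hZ]
  have hZmono : ∀ t : ℝ, t ≤ 0 → ∀ i, lam i * t ≤ t := by
    intro t ht i
    nlinarith [(hlam i).1]
  have hmemZ : ∀ᶠ t : ℝ in Filter.atBot, Z t ∈ QDom c₀ C₀ m := by
    filter_upwards [Filter.eventually_le_atBot (min 0 (Real.log c₀ - 1))] with t ht
    intro i
    simp only [SQD, Set.mem_setOf_eq, hZre]
    have h1 : t ≤ 0 := ht.trans (min_le_left _ _)
    have h2 : t ≤ Real.log c₀ - 1 := ht.trans (min_le_right _ _)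
    have : ((((lam i) * t : ℝ) : ℂ)).im = 0 := by simp
    rw [hZ]
    simp only [Complex.ofReal_re, Complex.ofReal_im]
    rw [abs_zero, Real.sqrt_zero, mul_zero]
    have := hZmono t h1 i
    linarith
  have heNZ : ∀ t : ℝ, t ≤ 0 → eNorm (Z t) ≤ Real.sqrt m * Real.exp t := by
    intro t ht
    apply eNorm_le _ (Real.exp_nonneg _)
    intro i
    rw [hZre]
    exact Real.exp_le_exp.2 (hZmono t ht i)
  have heNZsmall : ∀ᶠ t : ℝ in Filter.atBot, eNorm (Z t) < δ := by
    have hlim : Filter.Tendsto (fun t : ℝ => Real.sqrt m * Real.exp t)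
        Filter.atBot (nhds 0) := by
      have := Real.tendsto_exp_atBot.const_mul (Real.sqrt m)
      simpa using this
    filter_upwards [hlim.eventually_lt_const hδ, Filter.eventually_le_atBot (0:ℝ)] with t h1 h2
    exact lt_of_le_of_lt (heNZ t h2) h1
  -- rewrite the exponential sum at Z t
  have hmono : ∀ (α : Fin m → ℝ) (t : ℝ), expMono α (Z t) = Complex.exp (((L α * t : ℝ)) : ℂ) := by
    intro α t
    unfold expMono
    congr 1
    rw [hZ, hL]
    push_cast
    rw [Finset.sum_mul]
    congr 1; funext i; push_cast; ring
  set Φ : ℝ → ℂ := fun t => ∑ α ∈ S', b α * Complex.exp ((((L α - μ)*t : ℝ)) : ℂ) with hΦ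
  have hsplit : ∀ t : ℝ, ∑ α ∈ S, b α * expMono α (Z t)
      = Complex.exp ((μ*t : ℝ) : ℂ) * Φ t := by
    intro t
    have hfilter : ∑ α ∈ S, b α * expMono α (Z t) = ∑ α ∈ S', b α * expMono α (Z t) := by
      rw [hS']
      rw [Finset.sum_filter_of_ne]
      intro x hx hne hbx
      rw [hbx] at hne
      simp at hne
    rw [hfilter, hΦ, Finset.mul_sum]
    apply Finset.sum_congr rfl
    intro α hα
    rw [hmono α t]
    rw [show Complex.exp ((μ*t : ℝ):ℂ) * (b α * Complex.exp ((((L α - μ)*t : ℝ)):ℂ))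
        = b α * (Complex.exp ((μ*t : ℝ):ℂ) * Complex.exp ((((L α - μ)*t : ℝ)):ℂ)) by ring]
    rw [← Complex.exp_add]
    congr 2
    push_cast
    ring
  have hnorm : ∀ t : ℝ, ‖∑ α ∈ S, b α * expMono α (Z t)‖ = Real.exp (μ*t) * ‖Φ t‖ := by
    intro t
    rw [hsplit, norm_mul]
    congr 1
    rw [Complex.norm_exp]
    simp
  have hgap : ∀ α ∈ S'.erase αs, 0 < L α - μ := by
    intro α hα
    obtain ⟨hne, hαS'⟩ := Finset.mem_erase.1 hα
    have h1 : μ ≤ L α := hαsmin α hαS'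
    have h2 : L α ≠ μ := by
      rw [hμ]
      exact hLinj α hαS' αs hαsS' hne
    cases lt_or_eq_of_le h1 with
    | inl h => linarith
    | inr h => exact absurd h.symm h2
  have hΦlim : Filter.Tendsto Φ Filter.atBot (nhds (b αs)) := by
    have hΦeq : Φ = fun t => b αs * Complex.exp ((((L αs - μ)*t : ℝ)):ℂ)
        + ∑ α ∈ S'.erase αs, b α * Complex.exp ((((L α - μ)*t : ℝ)):ℂ) := by
      funext t
      rw [hΦ]
      exact (Finset.add_sum_erase S' _ hαsS').symm
    rw [hΦeq]
    have h1 : Filter.Tendsto (fun t : ℝ => b αs * Complex.exp ((((L αs - μ)*t : ℝ)):ℂ))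
        Filter.atBot (nhds (b αs)) := by
      have : ∀ t : ℝ, b αs * Complex.exp ((((L αs - μ)*t : ℝ)):ℂ) = b αs := by
        intro t
        rw [hμ, sub_self, zero_mul]
        simp
      simp only [this]
      exact tendsto_const_nhds
    have h2 : Filter.Tendsto (fun t : ℝ => ∑ α ∈ S'.erase αs,
        b α * Complex.exp ((((L α - μ)*t : ℝ)):ℂ)) Filter.atBot (nhds 0) := by
      have : Filter.Tendsto (fun t : ℝ => ∑ α ∈ S'.erase αs,
          b α * Complex.exp ((((L α - μ)*t : ℝ)):ℂ)) Filter.atBot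
          (nhds (∑ α ∈ S'.erase αs, 0)) := by
        apply tendsto_finset_sum
        intro α hα
        rw [tendsto_zero_iff_norm_tendsto_zero]
        have hn : ∀ t : ℝ, ‖b α * Complex.exp ((((L α - μ)*t : ℝ)):ℂ)‖
            = ‖b α‖ * Real.exp ((L α - μ)*t) := by
          intro t
          rw [norm_mul]
          congr 1
          rw [Complex.norm_exp]
          simp
        simp only [hn]
        have hexp0 : Filter.Tendsto (fun t : ℝ => Real.exp ((L α - μ)*t))
            Filter.atBot (nhds 0) := by
          apply Real.tendsto_exp_atBot.comp
          exact Filter.Tendsto.const_mul_atBot (hgap α hα) Filter.tendsto_id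
        have := hexp0.const_mul ‖b α‖
        simpa using this
      simpa using this
    have := h1.add h2
    simpa using this
  have hev : ∀ᶠ t in Filter.atBot, ‖Φ t‖ ≤ (M * Real.sqrt m ^ ν) * Real.exp ((ν - μ) * t) := by
    filter_upwards [hmemZ, heNZsmall, Filter.eventually_le_atBot (0:ℝ)] with t h1 h2 h3
    have hs := hsmall (Z t) h1 h2
    rw [hnorm] at hs
    have hup : eNorm (Z t) ^ ν ≤ Real.sqrt m ^ ν * Real.exp (ν * t) := by
      have h4 := Real.rpow_le_rpow (eNorm_nonneg _) (heNZ t h3) hν0.le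
      rw [Real.mul_rpow (Real.sqrt_nonneg _) (Real.exp_nonneg _)] at h4
      rw [Real.rpow_def_of_pos (Real.exp_pos t), Real.log_exp] at h4
      rw [show t * ν = ν * t by ring] at h4
      exact h4
    have hs' : Real.exp (μ*t) * ‖Φ t‖
        ≤ Real.exp (μ*t) * ((M * Real.sqrt m ^ ν) * Real.exp ((ν - μ) * t)) := by
      have h5 : M * eNorm (Z t) ^ ν ≤ M * (Real.sqrt m ^ ν * Real.exp (ν * t)) :=
        mul_le_mul_of_nonneg_left hup hM
      have h6 : Real.exp (μ*t) * ((M * Real.sqrt m ^ ν) * Real.exp ((ν - μ) * t))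
          = M * (Real.sqrt m ^ ν * Real.exp (ν * t)) := by
        rw [show Real.exp (μ*t) * ((M * Real.sqrt m ^ ν) * Real.exp ((ν - μ) * t))
            = (M * Real.sqrt m ^ ν) * (Real.exp (μ*t) * Real.exp ((ν - μ) * t)) by ring,
          ← Real.exp_add]
        ring_nf
      rw [h6]
      linarith
    exact (mul_le_mul_iff_right₀ (Real.exp_pos (μ*t))).1 hs'
  have hR : Filter.Tendsto (fun t : ℝ => (M * Real.sqrt m ^ ν) * Real.exp ((ν - μ) * t))
      Filter.atBot (nhds 0) := by
    have hexp0 : Filter.Tendsto (fun t : ℝ => Real.exp ((ν - μ)*t))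
        Filter.atBot (nhds 0) := by
      apply Real.tendsto_exp_atBot.comp
      exact Filter.Tendsto.const_mul_atBot (by linarith) Filter.tendsto_id
    have := hexp0.const_mul (M * Real.sqrt m ^ ν)
    simpa using this
  have hle := le_of_tendsto_of_tendsto hΦlim.norm hR hev
  exact hbαs (norm_le_zero_iff.1 hle)

lemma SQD_mono {c₁ C₁ c₂ C₂ : ℝ} (hc : 0 < c₁) (hcc : c₁ ≤ c₂) (hCC : C₂ ≤ C₁) :
    SQD c₁ C₁ ⊆ SQD c₂ C₂ := by
  intro z hz
  simp only [SQD, Set.mem_setOf_eq] at *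
  have h1 : Real.log c₁ ≤ Real.log c₂ := Real.log_le_log hc hcc
  have h2 := mul_le_mul_of_nonneg_right hCC (Real.sqrt_nonneg |z.im|)
  linarith

lemma unique_exp {m : ℕ} (hm : 1 ≤ m) {c C : ℝ} (hc : 0 < c) (hC : 0 < C)
    (g : (Fin m → ℂ) → ℂ) (a a' : (Fin m → ℝ) → ℂ)
    (h1 : HasAsymExp c C g a) (h2 : HasAsymExp c C g a') : a = a' := by
  by_contra hne
  obtain ⟨α₀, hα₀⟩ : ∃ α₀, a α₀ ≠ a' α₀ := Function.ne_iff.1 hne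
  have hα₀nn : ∀ i, 0 ≤ α₀ i := by
    rcases eq_or_ne (a α₀) 0 with h | h
    · have h' : a' α₀ ≠ 0 := by
        intro hh; rw [h, hh] at hα₀; exact hα₀ rfl
      exact h2.1.1 α₀ h'
    · exact h1.1.1 α₀ h
  set ν : ℝ := ∑ i, α₀ i + 1 with hν
  have hw0 : 0 ≤ ∑ i, α₀ i := Finset.sum_nonneg fun i _ => hα₀nn i
  have hνpos : 0 < ν := by rw [hν]; linarith
  obtain ⟨c₁, C₁, hc₁, hC₁, hsub₁, F₁, hF₁, hest₁⟩ := h1.2 ν hνpos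
  obtain ⟨c₂, C₂, hc₂, hC₂, hsub₂, F₂, hF₂, hest₂⟩ := h2.2 ν hνpos
  obtain ⟨δ₁, hδ₁pos, hδ₁⟩ := hest₁ (1/2) (by norm_num)
  obtain ⟨δ₂, hδ₂pos, hδ₂⟩ := hest₂ (1/2) (by norm_num)
  set c₀ : ℝ := min c₁ c₂ with hc₀def
  set C₀ : ℝ := max C₁ C₂ with hC₀def
  have hc₀ : 0 < c₀ := lt_min hc₁ hc₂
  have hQ1 : QDom c₀ C₀ m ⊆ QDom c₁ C₁ m :=
    fun z hz i => SQD_mono hc₀ (min_le_left _ _) (le_max_left _ _) (hz i)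
  have hQ2 : QDom c₀ C₀ m ⊆ QDom c₂ C₂ m :=
    fun z hz i => SQD_mono hc₀ (min_le_right _ _) (le_max_right _ _) (hz i)
  set S : Finset (Fin m → ℝ) := F₁ ∪ F₂ with hS
  set bb : (Fin m → ℝ) → ℂ := fun α => a α - a' α with hbb
  have hα₀S : α₀ ∈ S := by
    rw [hS]
    rcases eq_or_ne (a α₀) 0 with h | h
    · have h' : a' α₀ ≠ 0 := by
        intro hh; rw [h, hh] at hα₀; exact hα₀ rfl
      exact Finset.mem_union_right _ ((hF₂ α₀).2 ⟨h', by rw [hν]; linarith⟩)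
    · exact Finset.mem_union_left _ ((hF₁ α₀).2 ⟨h, by rw [hν]; linarith⟩)
  have hSnn : ∀ α ∈ S, ∀ i, 0 ≤ α i := by
    intro α hα
    rcases Finset.mem_union.1 hα with h | h
    · exact h1.1.1 α ((hF₁ α).1 h).1
    · exact h2.1.1 α ((hF₂ α).1 h).1
  have hsum : ∀ z : Fin m → ℂ, ∑ α ∈ S, bb α * expMono α z
      = (∑ α ∈ F₁, a α * expMono α z) - (∑ α ∈ F₂, a' α * expMono α z) := by
    intro z
    have e1 : ∑ α ∈ S, bb α * expMono α z
        = (∑ α ∈ S, a α * expMono α z) - (∑ α ∈ S, a' α * expMono α z) := by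
      rw [← Finset.sum_sub_distrib]
      apply Finset.sum_congr rfl
      intro α _
      rw [hbb]; ring
    have e2 : ∑ α ∈ S, a α * expMono α z = ∑ α ∈ F₁, a α * expMono α z := by
      symm
      apply Finset.sum_subset (Finset.subset_union_left)
      intro x hx hnx
      have hxF₂ : x ∈ F₂ := by
        rcases Finset.mem_union.1 hx with h | h
        · exact absurd h hnx
        · exact h
      have hax : a x = 0 := by
        by_contra hax
        exact hnx ((hF₁ x).2 ⟨hax, ((hF₂ x).1 hxF₂).2⟩)
      rw [hax, zero_mul]
    have e3 : ∑ α ∈ S, a' α * expMono α z = ∑ α ∈ F₂, a' α * expMono α z := by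
      symm
      apply Finset.sum_subset (Finset.subset_union_right)
      intro x hx hnx
      have hxF₁ : x ∈ F₁ := by
        rcases Finset.mem_union.1 hx with h | h
        · exact h
        · exact absurd h hnx
      have hax : a' x = 0 := by
        by_contra hax
        exact hnx ((hF₂ x).2 ⟨hax, ((hF₁ x).1 hxF₁).2⟩)
      rw [hax, zero_mul]
    rw [e1, e2, e3]
  have hsmall : ∀ z ∈ QDom c₀ C₀ m, eNorm z < min δ₁ δ₂ →
      ‖∑ α ∈ S, bb α * expMono α z‖ ≤ 1 * eNorm z ^ ν := by
    intro z hz hN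
    have m1 := hδ₁ z (hQ1 hz) (hN.trans_le (min_le_left _ _))
    have m2 := hδ₂ z (hQ2 hz) (hN.trans_le (min_le_right _ _))
    rw [hsum]
    have e : (∑ α ∈ F₁, a α * expMono α z) - (∑ α ∈ F₂, a' α * expMono α z)
        = (g z - ∑ α ∈ F₂, a' α * expMono α z) - (g z - ∑ α ∈ F₁, a α * expMono α z) := by
      ring
    rw [e]
    calc ‖(g z - ∑ α ∈ F₂, a' α * expMono α z) - (g z - ∑ α ∈ F₁, a α * expMono α z)‖
        ≤ ‖g z - ∑ α ∈ F₂, a' α * expMono α z‖ + ‖g z - ∑ α ∈ F₁, a α * expMono α z‖ :=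
          norm_sub_le _ _
      _ ≤ 1/2 * eNorm z ^ ν + 1/2 * eNorm z ^ ν := add_le_add m2 m1
      _ = 1 * eNorm z ^ ν := by ring
  exact expsum_contra hm hc₀ S bb hSnn α₀ hα₀S (sub_ne_zero.2 hα₀) ν
    (by rw [hν]; linarith) (by norm_num) (lt_min hδ₁pos hδ₂pos) hsmall

/-- Quasianalyticity: a holomorphic function on `Ω(c,C)^m` with asymptotic
expansion `0` vanishes identically; hence asymptotic expansions (with natural support) are
unique, and two holomorphic functions with the same asymptotic expansion coincide. -/
theorem stmt2 (m : ℕ) (hm : 1 ≤ m) (c C : ℝ) (hc : 0 < c) (hC : 0 < C)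
    (f : (Fin m → ℂ) → ℂ) (hf : DifferentiableOn ℂ f (QDom c C m))
    (h0 : HasAsymExp c C f (fun _ => 0)) :
    (∀ z ∈ QDom c C m, f z = 0) ∧
    (∀ g : (Fin m → ℂ) → ℂ, DifferentiableOn ℂ g (QDom c C m) →
      ∀ a a' : (Fin m → ℝ) → ℂ, HasAsymExp c C g a → HasAsymExp c C g a' → a = a') ∧
    (∀ g₁ g₂ : (Fin m → ℂ) → ℂ, DifferentiableOn ℂ g₁ (QDom c C m) →
      DifferentiableOn ℂ g₂ (QDom c C m) →
      ∀ a : (Fin m → ℝ) → ℂ, HasAsymExp c C g₁ a → HasAsymExp c C g₂ a →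
        ∀ z ∈ QDom c C m, g₁ z = g₂ z) := by

  refine ⟨vanish hm hc hC hf h0, ?_, ?_⟩
  · intro g _ a a' ha ha'
    exact unique_exp hm hc hC g a a' ha ha'
  · intro g₁ g₂ hg₁ hg₂ a ha₁ ha₂ z hz
    have hdiff : DifferentiableOn ℂ (fun z => g₁ z - g₂ z) (QDom c C m) := hg₁.sub hg₂
    have hnat0 : NaturalSeries (fun _ : Fin m → ℝ => (0:ℂ)) := by
      constructor
      · intro α h; exact absurd rfl h
      · intro i R hR
        have : {r : ℝ | (∃ α : Fin m → ℝ, (fun _ : Fin m → ℝ => (0:ℂ)) α ≠ 0 ∧ α i = r) ∧ r ≤ R}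
            = ∅ := by
          ext r; simp
        rw [this]
        exact Set.finite_empty
    have hexp0 : HasAsymExp c C (fun z => g₁ z - g₂ z) (fun _ => 0) := by
      refine ⟨hnat0, ?_⟩
      intro ν hν
      obtain ⟨c₁, C₁, hc₁, hC₁, hsub₁, F₁, hF₁, hest₁⟩ := ha₁.2 ν hν
      obtain ⟨c₂, C₂, hc₂, hC₂, hsub₂, F₂, hF₂, hest₂⟩ := ha₂.2 ν hν
      have hFF : F₁ = F₂ := Finset.ext fun α => by rw [hF₁, hF₂]
      have hc₀ : 0 < min c₁ c₂ := lt_min hc₁ hc₂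
      refine ⟨min c₁ c₂, max C₁ C₂, hc₀, lt_of_lt_of_le hC₁ (le_max_left _ _), ?_, ∅, ?_, ?_⟩
      · intro w hw
        exact hsub₁ (SQD_mono hc₀ (min_le_left _ _) (le_max_left _ _) hw)
      · intro α; simp
      · intro ε hε
        obtain ⟨δ₁, hδ₁pos, hδ₁⟩ := hest₁ (ε/2) (by linarith)
        obtain ⟨δ₂, hδ₂pos, hδ₂⟩ := hest₂ (ε/2) (by linarith)
        refine ⟨min δ₁ δ₂, lt_min hδ₁pos hδ₂pos, ?_⟩
        intro w hw hN
        have hw1 : w ∈ QDom c₁ C₁ m :=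
          fun i => SQD_mono hc₀ (min_le_left _ _) (le_max_left _ _) (hw i)
        have hw2 : w ∈ QDom c₂ C₂ m :=
          fun i => SQD_mono hc₀ (min_le_right _ _) (le_max_right _ _) (hw i)
        have m1 := hδ₁ w hw1 (hN.trans_le (min_le_left _ _))
        have m2 := hδ₂ w hw2 (hN.trans_le (min_le_right _ _))
        rw [hFF] at m1
        have e : (g₁ w - g₂ w) - ∑ α ∈ (∅ : Finset (Fin m → ℝ)), (fun _ => (0:ℂ)) α * expMono α w
            = (g₁ w - ∑ α ∈ F₂, a α * expMono α w) - (g₂ w - ∑ α ∈ F₂, a α * expMono α w) := by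
          simp
        rw [e]
        calc ‖(g₁ w - ∑ α ∈ F₂, a α * expMono α w) - (g₂ w - ∑ α ∈ F₂, a α * expMono α w)‖
            ≤ ‖g₁ w - ∑ α ∈ F₂, a α * expMono α w‖ + ‖g₂ w - ∑ α ∈ F₂, a α * expMono α w‖ :=
              norm_sub_le _ _
          _ ≤ ε/2 * eNorm w ^ ν + ε/2 * eNorm w ^ ν := add_le_add m1 m2
          _ = ε * eNorm w ^ ν := by ring
    have := vanish hm hc hC hdiff hexp0 z hz
    exact sub_eq_zero.1 this
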